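/- Suppose the RFIM on Λ_n = [-n,n]^d ∩ Z^d with i.i.d. external field satisfies SSM(C) for some C > 0. For a constant C_* > 0, call a vertex v ∈ Λ_n^{(R)} = Λ_n ∩ R·Z^d Good if for every w in the ℓ∞-ball B_R(v) around v and all integers ℓ, r with (log R)² ≤ ℓ ≤ 2r ≤ R/4, max over boxes B ∈ { B_r(w) + a : a ∈ {−r+1,…,r−1}^d }, over z ∈ ∂B with d(w,z) = ℓ, and over ξ ∈ {−1,+1}^{∂B∖{z}} of d_TV( μ_B^{ξ+}(σ_w ∈ ·), μ_B^{ξ−}(σ_w ∈ ·) ) is at most e^{−ℓ/C_*}; otherwise call v Bad. Then there exist constants C_*(d,C) and R_0(d,C) such that for all R ≥ R_0 and every v ∈ Λ_n^{(R)}, P_h( v is Bad ) ≤ R^{−5}. -/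

import Mathlib

open scoped BigOperators
open MeasureTheory ProbabilityTheory

noncomputable section
open scoped Classical

namespace RFIM

/-- A site of the lattice `ℤ^d`. -/
abbrev Site (d : ℕ) := Fin d → ℤ

/-- ℓ∞ distance on `ℤ^d`. -/
def distInf {d : ℕ} (x y : Site d) : ℕ :=
  Finset.univ.sup fun i => (x i - y i).natAbs

/-- Nearest-neighbour adjacency on `ℤ^d` (ℓ¹ distance one). -/
def Adj {d : ℕ} (x y : Site d) : Prop := (∑ i, (x i - y i).natAbs) = 1

/-- Closed ℓ∞ ball of radius `r` about `o`, as a finite set of sites. -/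
def ball {d : ℕ} (o : Site d) (r : ℕ) : Finset (Site d) :=
  Fintype.piFinset fun i => Finset.Icc (o i - (r : ℤ)) (o i + (r : ℤ))

/-- The box `Λ_n = [-n,n]^d ∩ ℤ^d`. -/
def box (d n : ℕ) : Finset (Site d) := ball (fun _ => 0) n

/-- Exterior vertex boundary of `A` inside `Λ`. -/
def bdryIn {d : ℕ} (Λ A : Finset (Site d)) : Finset (Site d) :=
  (Λ \ A).filter fun v => ∃ u ∈ A, Adj u v

/-- Exterior vertex boundary of `A` in all of `ℤ^d`. -/
def bdry {d : ℕ} (A : Finset (Site d)) : Finset (Site d) :=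
  (A.biUnion fun u => ball u 1).filter fun v => v ∉ A ∧ ∃ u ∈ A, Adj u v

/-- Ising configurations on a finite set of sites. -/
abbrev Conf {d : ℕ} (A : Finset (Site d)) := ↥A → Bool

/-- The spin value (±1) of a Boolean. -/
def spin (b : Bool) : ℝ := if b then 1 else -1

/-- Energy (negated Hamiltonian) of the RFIM on `A` at inverse temperature `β`, external
field `h`, with boundary condition `τ` on the set `bd`. -/
def energy {d : ℕ} (β : ℝ) (h : Site d → ℝ) (A bd : Finset (Site d)) (τ : Site d → Bool)
    (σ : Conf A) : ℝ :=
  β / 2 * ∑ u : A, ∑ v : A, (if Adj u.1 v.1 then spin (σ u) * spin (σ v) else 0)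
    + β * ∑ u : A, ∑ v ∈ bd, (if Adj u.1 v then spin (σ u) * spin (τ v) else 0)
    + ∑ u : A, h u.1 * spin (σ u)

/-- The RFIM Gibbs measure on `A` with boundary condition `τ` on `bd`, as a density. -/
def gibbs {d : ℕ} (β : ℝ) (h : Site d → ℝ) (A bd : Finset (Site d)) (τ : Site d → Bool) :
    Conf A → ℝ :=
  fun σ => Real.exp (energy β h A bd τ σ) / ∑ σ' : Conf A, Real.exp (energy β h A bd τ σ')

/-- The RFIM measure on `A` with free boundary condition. -/
def gibbsFree {d : ℕ} (β : ℝ) (h : Site d → ℝ) (A : Finset (Site d)) : Conf A → ℝ :=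
  gibbs β h A ∅ fun _ => true

/-- Probability that the spin at `o` equals `+1` under the density `p`. -/
def probPlusAt {d : ℕ} {A : Finset (Site d)} (p : Conf A → ℝ) (o : Site d) : ℝ :=
  if ho : o ∈ A then ∑ σ : Conf A, (if σ ⟨o, ho⟩ = true then p σ else 0) else 0

/-- Total variation distance between the single-site marginals at `o` of `p` and `q`. -/
def tvAt {d : ℕ} {A : Finset (Site d)} (p q : Conf A → ℝ) (o : Site d) : ℝ :=
  |probPlusAt p o - probPlusAt q o|

/-- Total variation distance between two densities on a finite space. -/
def tvDist {X : Type*} [Fintype X] (p q : X → ℝ) : ℝ := 1 / 2 * ∑ x, |p x - q x|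

/-- Mean of `φ` under the density `p`. -/
def expectVal {X : Type*} [Fintype X] (p φ : X → ℝ) : ℝ := ∑ x, p x * φ x

/-- Variance of `φ` under the density `p`. -/
def varOf {X : Type*} [Fintype X] (p φ : X → ℝ) : ℝ :=
  expectVal p (fun x => φ x ^ 2) - expectVal p φ ^ 2

/-- Squared oscillation of `φ`. -/
def osc {X : Type*} [Fintype X] [Nonempty X] (φ : X → ℝ) : ℝ :=
  ((⨆ x, φ x) - ⨅ x, φ x) ^ 2

/-- The Dirichlet form of single-site Glauber dynamics for the density `p`. -/
def dirichlet {d : ℕ} {A : Finset (Site d)} (p φ : Conf A → ℝ) : ℝ :=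
  1 / 2 * ∑ σ : Conf A, ∑ σ' : Conf A,
    (if (Finset.univ.filter fun u : ↥A => σ u ≠ σ' u).card = 1 then
      p σ * p σ' / (p σ + p σ') * (φ σ - φ σ') ^ 2 else 0)

/-- The spectral gap of Glauber dynamics for the density `p`. -/
def gap {d : ℕ} {A : Finset (Site d)} (p : Conf A → ℝ) : ℝ :=
  sInf {r : ℝ | ∃ φ : Conf A → ℝ, varOf p φ ≠ 0 ∧ r = dirichlet p φ / varOf p φ}

/-- Conditional probability of spin `b` at `u`, given all other spins of `σ`. -/
def condProb {d : ℕ} {A : Finset (Site d)} (p : Conf A → ℝ) (σ : Conf A) (u : ↥A) (b : Bool) :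
    ℝ :=
  p (Function.update σ u b) / (p (Function.update σ u true) + p (Function.update σ u false))

/-- Generator of continuous-time single-site Glauber dynamics, as a matrix. -/
def generator {d : ℕ} {A : Finset (Site d)} (p : Conf A → ℝ) : Matrix (Conf A) (Conf A) ℝ :=
  Matrix.of fun σ σ' =>
    ∑ u : ↥A,
      ((if σ' = Function.update σ u true then condProb p σ u true else 0)
        + (if σ' = Function.update σ u false then condProb p σ u false else 0)
        - (if σ' = σ then 1 else 0))

/-- The continuous-time Glauber semigroup `P_t = e^{tL}`. -/
def heatSG {d : ℕ} {A : Finset (Site d)} (p : Conf A → ℝ) (t : ℝ) :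
    Matrix (Conf A) (Conf A) ℝ :=
  Matrix.of fun σ σ' => ∑' k : ℕ, t ^ k / (Nat.factorial k : ℝ) * (generator p ^ k) σ σ'

/-- Action of the Glauber semigroup on a test function. -/
def Ptfun {d : ℕ} {A : Finset (Site d)} (p : Conf A → ℝ) (t : ℝ) (φ : Conf A → ℝ) :
    Conf A → ℝ :=
  (heatSG p t).mulVec φ

/-- The (1/4)-total-variation mixing time of continuous-time Glauber dynamics. -/
def mixingTime {d : ℕ} {A : Finset (Site d)} (p : Conf A → ℝ) : ℝ :=
  sInf {t : ℝ | 0 ≤ t ∧ ∀ σ : Conf A, tvDist (fun σ' => heatSG p t σ σ') p ≤ 1 / 4}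

/-- The coordinates of `h` are independent with a common distribution. -/
def IIDField {d : ℕ} {Ω : Type*} [MeasurableSpace Ω] (P : Measure Ω)
    (h : Ω → Site d → ℝ) : Prop :=
  (∀ x, Measurable fun ω => h ω x) ∧
  iIndepFun (fun x ω => h ω x) P ∧
  ∀ x y, IdentDistrib (fun ω => h ω x) (fun ω => h ω y) P P

/-- The coordinates of `h` are i.i.d. with a symmetric distribution. -/
def IIDSymField {d : ℕ} {Ω : Type*} [MeasurableSpace Ω] (P : Measure Ω)
    (h : Ω → Site d → ℝ) : Prop :=
  IIDField P h ∧ ∀ x, IdentDistrib (fun ω => h ω x) (fun ω => -h ω x) P P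

/-- The absolute values of the coordinates of `h` are i.i.d. (signs may be dependent). -/
def IIDAbsField {d : ℕ} {Ω : Type*} [MeasurableSpace Ω] (P : Measure Ω)
    (h : Ω → Site d → ℝ) : Prop :=
  (∀ x, Measurable fun ω => h ω x) ∧
  iIndepFun (fun x ω => |h ω x|) P ∧
  ∀ x y, IdentDistrib (fun ω => |h ω x|) (fun ω => |h ω y|) P P

/-- Weak spatial mixing in expectation, `WSM(C)`, for the RFIM on `Λ`. -/
def WSM {d : ℕ} (β : ℝ) (Λ : Finset (Site d)) {Ω : Type*} [MeasurableSpace Ω]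
    (P : Measure Ω) (h : Ω → Site d → ℝ) (C : ℝ) : Prop :=
  ∀ o ∈ Λ, ∀ r : ℕ, 1 ≤ r →
    (∫ ω, tvAt (gibbs β (h ω) (ball o r ∩ Λ) (bdryIn Λ (ball o r ∩ Λ)) fun _ => true)
               (gibbs β (h ω) (ball o r ∩ Λ) (bdryIn Λ (ball o r ∩ Λ)) fun _ => false) o ∂P)
      ≤ C * Real.exp (-(r : ℝ) / C)

/-- The boundary condition agreeing with `ξ` off `z` and taking value `b` at `z`. -/
def extendBC {d : ℕ} (z : Site d) (ξ : Site d → Bool) (b : Bool) : Site d → Bool :=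
  fun x => if x = z then b else ξ x

/-- Strong spatial mixing in expectation, `SSM(C)`, for the RFIM. -/
def SSM {d : ℕ} (β : ℝ) {Ω : Type*} [MeasurableSpace Ω] (P : Measure Ω)
    (h : Ω → Site d → ℝ) (C : ℝ) : Prop :=
  ∀ r : ℕ, 1 ≤ r → ∀ w : Site d, (∀ i, w i ∈ Finset.Ioo (-(r : ℤ)) (r : ℤ)) →
    ∀ z ∈ bdry (ball w r),
      (∫ ω, (⨆ ξ : Site d → Bool,
        tvAt (gibbs β (h ω) (ball w r) (bdry (ball w r)) (extendBC z ξ true))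
             (gibbs β (h ω) (ball w r) (bdry (ball w r)) (extendBC z ξ false)) fun _ => 0) ∂P)
        ≤ C * Real.exp (-(distInf (fun _ => 0) z : ℝ) / C)

/-- `ρ(β,d,K)`. -/
def rhoK (d : ℕ) (β K : ℝ) : ℝ :=
  Real.exp (2 * d * β - K) / (Real.exp (2 * d * β - K) + Real.exp (-(2 * d * β) + K))

/-- The single-site distribution with external field `η`. -/
def sdist (η : ℝ) (b : Bool) : ℝ := Real.exp (η * spin b) / (Real.exp η + Real.exp (-η))

/-- Energy of the RFIM restricted to the sub-domain `D` of `A` (free boundary on `D`). -/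
def energyOn {d : ℕ} (β : ℝ) (h : Site d → ℝ) (A D : Finset (Site d)) (σ : Conf A) : ℝ :=
  β / 2 * ∑ u : A, ∑ v : A,
      (if u.1 ∈ D ∧ v.1 ∈ D ∧ Adj u.1 v.1 then spin (σ u) * spin (σ v) else 0)
    + ∑ u : A, (if u.1 ∈ D then h u.1 * spin (σ u) else 0)

/-- Unnormalized weight of the RFIM on `D ⊆ A` with free boundary, embedded in `Conf A` by
freezing all spins outside `D` to `+1`. -/
def stageWeight {d : ℕ} (β : ℝ) (h : Site d → ℝ) (A D : Finset (Site d)) (σ : Conf A) : ℝ :=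
  if ∀ u : ↥A, u.1 ∉ D → σ u = true then Real.exp (energyOn β h A D σ) else 0

/-- The RFIM measure on `D ⊆ A` with free boundary, embedded in `Conf A`. -/
def stageMeas {d : ℕ} (β : ℝ) (h : Site d → ℝ) (A D : Finset (Site d)) : Conf A → ℝ :=
  fun σ => stageWeight β h A D σ / ∑ σ' : Conf A, stageWeight β h A D σ'

/-- One step of discrete-time Glauber dynamics for `p`, updating a uniformly chosen
vertex of `D`. -/
def glauberStepOn {d : ℕ} {A : Finset (Site d)} (p : Conf A → ℝ) (D : Finset (Site d)) :
    Matrix (Conf A) (Conf A) ℝ :=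
  Matrix.of fun σ σ' => 1 / (D.card : ℝ) * ∑ u : ↥A,
    (if u.1 ∈ D then
      (if σ' = Function.update σ u true then condProb p σ u true else 0)
      + (if σ' = Function.update σ u false then condProb p σ u false else 0)
     else 0)

/-- One step of discrete-time single-site Glauber dynamics for a density `π` on `V → Bool`:
a uniformly chosen vertex is resampled from the conditional distribution. -/
def glauberStep {V : Type*} [Fintype V] [DecidableEq V] (π : (V → Bool) → ℝ) :
    Matrix (V → Bool) (V → Bool) ℝ :=
  Matrix.of fun σ σ' => 1 / (Fintype.card V : ℝ) * ∑ v : V,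
    ((if σ' = Function.update σ v true then
        π (Function.update σ v true)
          / (π (Function.update σ v true) + π (Function.update σ v false)) else 0)
     + (if σ' = Function.update σ v false then
        π (Function.update σ v false)
          / (π (Function.update σ v true) + π (Function.update σ v false)) else 0))

/-- The domain consisting of the first `i` vertices of the enumeration `v`. -/
def prefDom {d : ℕ} (v : ℕ → Site d) (i : ℕ) : Finset (Site d) := (Finset.range i).image v

/-- Extension of a law `p` by an independent spin at `w` with field `η`. -/
def extendStep {d : ℕ} {A : Finset (Site d)} (w : Site d) (η : ℝ) (p : Conf A → ℝ) :
    Conf A → ℝ :=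
  fun σ => if hw : w ∈ A then p (Function.update σ ⟨w, hw⟩ true) * sdist η (σ ⟨w, hw⟩) else p σ

/-- The law of the iterative sampling algorithm after stage `i+1` (domains grow one vertex
at a time along the enumeration `v`; each stage runs `k` steps of Glauber dynamics on the
current domain; spins outside the current domain are frozen to `+1`). -/
def algLaw {d : ℕ} (n : ℕ) (β : ℝ) (h : Site d → ℝ) (v : ℕ → Site d) (k : ℕ) :
    ℕ → Conf (box d n) → ℝ
  | 0 => fun σ => ∏ u : ↥(box d n),
      (if u.1 = v 0 then sdist (h u.1) (σ u) else if σ u = true then 1 else 0)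
  | (i + 1) =>
      Matrix.vecMul (extendStep (v (i + 1)) (h (v (i + 1))) (algLaw n β h v k i))
        (glauberStepOn (stageMeas β h (box d n) (prefDom v (i + 2))) (prefDom v (i + 2)) ^ k)

/-- The collection `Q_n` of cube-like domains. -/
def Qcoll (d n : ℕ) : Set (Finset (Site d)) :=
  {Λ | Λ ⊆ box d n ∧ ∃ r : ℕ, r ≤ n - 1 ∧ ∃ A : Finset (Site d),
    Λ = ball (fun _ => 0) r ∪ (bdry (ball (fun _ => 0) r) ∩ A)}

/-- Adjacency of open sites in the percolation configuration `w`. -/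
def openAdj {d : ℕ} (w : Site d → Bool) (x y : Site d) : Prop :=
  Adj x y ∧ w x = true ∧ w y = true

/-- The open cluster of `x` in `w` has at least `r` vertices. -/
def clusterAtLeast {d : ℕ} (w : Site d → Bool) (x : Site d) (r : ℕ) : Prop :=
  ∃ S : Finset (Site d), w x = true ∧
    (∀ y ∈ S, Relation.ReflTransGen (openAdj w) x y) ∧ r ≤ S.card

/-- `ω^i = ω^h ∨ η` : the union of the weak-field sites and the Bernoulli noise. -/
def omI {d : ℕ} (K : ℝ) (f : Site d → ℝ) (e : Site d → Bool) : Site d → Bool :=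
  fun x => if |f x| ≤ K then true else e x

/-- `η` is an i.i.d. Bernoulli(ρ) field. -/
def BernoulliField {d : ℕ} {Ω' : Type*} [MeasurableSpace Ω'] (P' : Measure Ω')
    (η : Ω' → Site d → Bool) (ρ : ℝ) : Prop :=
  (∀ x, Measurable fun ω => η ω x) ∧
  iIndepFun (fun x ω => η ω x) P' ∧
  ∀ x, P' {ω | η ω x = true} = ENNReal.ofReal ρ

/-- The coarse-grained lattice `Λ_n^{(R)} = Λ_n ∩ R·ℤ^d`. -/
def coarse (d n R : ℕ) : Finset (Site d) :=
  (box d n).filter fun v => ∀ i, (R : ℤ) ∣ v i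

/-- A coarse-graining vertex `v` is `Good` (anti-concentrated-field version): conditionally
on `ω^h`, clusters of `ω^i = ω^h ∨ η` near `v` have exponential tails. -/
def GoodAnti {d : ℕ} (n R : ℕ) (K : ℝ) {Ω' : Type*} [MeasurableSpace Ω'] (P' : Measure Ω')
    (η : Ω' → Site d → Bool) (f : Site d → ℝ) (v : Site d) : Prop :=
  ∀ w ∈ ball v R ∩ box d n, ∀ r : ℕ,
    Real.log R ^ 2 ≤ (r : ℝ) → (r : ℝ) ≤ (R : ℝ) / 8 →
    P' {ω' | clusterAtLeast (omI K f (η ω')) w r} ≤ ENNReal.ofReal (Real.exp (-(r : ℝ)))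

/-- A coarse-graining vertex `v` is `Good` (SSM version). -/
def GoodSSM {d : ℕ} (n R : ℕ) (Cstar β : ℝ) (f : Site d → ℝ) (v : Site d) : Prop :=
  ∀ w ∈ ball v R ∩ box d n, ∀ ℓ r : ℕ,
    Real.log R ^ 2 ≤ (ℓ : ℝ) → ℓ ≤ 2 * r → (2 * r : ℝ) ≤ (R : ℝ) / 4 →
    ∀ a : Site d, (∀ i, a i ∈ Finset.Ioo (-(r : ℤ)) (r : ℤ)) →
    ∀ z ∈ bdry (ball (w + a) r), distInf w z = ℓ →
      (⨆ ξ : Site d → Bool,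
        tvAt (gibbs β f (ball (w + a) r) (bdry (ball (w + a) r)) (extendBC z ξ true))
             (gibbs β f (ball (w + a) r) (bdry (ball (w + a) r)) (extendBC z ξ false)) w)
        ≤ Real.exp (-(ℓ : ℝ) / Cstar)

/-- One step of the `R-*`-adjacency walk inside `S`. -/
def RstarStep {d : ℕ} (R : ℕ) (S : Finset (Site d)) (x y : Site d) : Prop :=
  x ∈ S ∧ y ∈ S ∧ distInf x y = R

/-- The `R-*`-connected component of `w` inside `S` (empty if `w ∉ S`). -/
def componentOf {d : ℕ} (R : ℕ) (S : Finset (Site d)) (w : Site d) : Finset (Site d) :=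
  S.filter fun x => w ∈ S ∧ Relation.ReflTransGen (RstarStep R S) w x

/-- `B_C`: vertices of `Λ_n` within distance `R` of the component `C0` and at distance at
least `R/2` from the good set. -/
def BCblock {d : ℕ} (n R : ℕ) (GoodS C0 : Finset (Site d)) : Finset (Site d) :=
  (box d n).filter fun x => (∃ y ∈ C0, distInf x y ≤ R) ∧ ∀ g ∈ GoodS, R / 2 ≤ distInf x g

/-- Shifts `a ∈ {-R/8, …, R/8}^d`. -/
def shifts (d R : ℕ) : Finset (Site d) :=
  Fintype.piFinset fun _ => Finset.Icc (-(R / 8 : ℕ) : ℤ) ((R / 8 : ℕ) : ℤ)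

/-- Index set of type-1 blocks: centers within distance `3R/4` of the good set. -/
def type1Idx {d : ℕ} (n R : ℕ) (GoodS : Finset (Site d)) : Finset (Site d) :=
  (box d n).filter fun w => ∃ g ∈ GoodS, distInf w g ≤ 3 * R / 4

/-- The type-1 block centered at `w`. -/
def type1Block {d : ℕ} (n R : ℕ) (w : Site d) : Finset (Site d) :=
  ball w (R / 8) ∩ box d n

/-- Index set of type-2 blocks: a bad component together with a shift. -/
def type2Idx {d : ℕ} (n R : ℕ) (BadS : Finset (Site d)) :
    Finset (Finset (Site d) × Site d) :=
  (BadS.image fun w => componentOf R BadS w) ×ˢ shifts d R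

/-- The type-2 block indexed by a component and a shift. -/
def type2Block {d : ℕ} (n R : ℕ) (GoodS : Finset (Site d)) (c : Finset (Site d) × Site d) :
    Finset (Site d) :=
  ((BCblock n R GoodS c.1).image fun x => x + c.2) ∩ box d n

/-- Membership in the collection of blocks constructed from `GoodS` and `BadS`. -/
def IsBlock {d : ℕ} (n R : ℕ) (GoodS BadS : Finset (Site d)) (B : Finset (Site d)) : Prop :=
  (∃ w ∈ type1Idx n R GoodS, B = type1Block (d := d) n R w) ∨
  (∃ c ∈ type2Idx n R BadS, B = type2Block n R GoodS c)

/-- Heat-bath resampling kernel of the block `B` for the measure `p` on `Conf A`. -/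
def blockKernel {d : ℕ} {A : Finset (Site d)} (p : Conf A → ℝ) (B : Finset (Site d)) :
    Matrix (Conf A) (Conf A) ℝ :=
  Matrix.of fun σ σ' =>
    if ∀ u : ↥A, u.1 ∉ B → σ' u = σ u then
      p σ' / ∑ τ : Conf A, (if ∀ u : ↥A, u.1 ∉ B → τ u = σ u then p τ else 0)
    else 0

/-- Dirichlet form of the continuous-time dynamics driven by the resampling kernel `Kmat`. -/
def kernelDirichlet {d : ℕ} {A : Finset (Site d)} (p : Conf A → ℝ)
    (Kmat : Matrix (Conf A) (Conf A) ℝ) (φ : Conf A → ℝ) : ℝ :=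
  1 / 2 * ∑ σ : Conf A, ∑ σ' : Conf A, p σ * Kmat σ σ' * (φ σ - φ σ') ^ 2

/-- Hamming distance between two configurations. -/
def hamming {d : ℕ} {A : Finset (Site d)} (σ σ' : Conf A) : ℕ :=
  (Finset.univ.filter fun u : ↥A => σ u ≠ σ' u).card

/-- The event (as a finset of configurations) that all spins on `bd` take the value `b`. -/
def pinEvent {d : ℕ} (Λ : Finset (Site d)) (bd : Finset (Site d)) (b : Bool) :
    Finset (Conf Λ) :=
  Finset.univ.filter fun σ => ∀ u : ↥Λ, u.1 ∈ bd → σ u = b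

/-- Conditional probability that the spin at `u` is `+1`, given the event `E`. -/
def condPlusProb {d : ℕ} {Λ : Finset (Site d)} (p : Conf Λ → ℝ) (E : Finset (Conf Λ))
    (u : ↥Λ) : ℝ :=
  (∑ σ ∈ E, (if σ u = true then p σ else 0)) / ∑ σ ∈ E, p σ

/-- `δ_0(v,ℓ)`: influence of the boundary of `B_ℓ(v)` on the spin at `v`. -/
def delta0 {d : ℕ} (β : ℝ) (h : Site d → ℝ) (Λ : Finset (Site d)) (v : Site d) (ℓ : ℕ) : ℝ :=
  tvAt (gibbs β h (ball v ℓ ∩ Λ) (bdryIn Λ (ball v ℓ ∩ Λ)) fun _ => true)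
       (gibbs β h (ball v ℓ ∩ Λ) (bdryIn Λ (ball v ℓ ∩ Λ)) fun _ => false) v

/-- Ising measure on a finite graph `G` with couplings `J` and external field `h`. -/
def isingGraph {V : Type*} [Fintype V] (G : SimpleGraph V) (J : V → V → ℝ) (h : V → ℝ) :
    (V → Bool) → ℝ :=
  fun σ =>
    Real.exp (1 / 2 * ∑ u, ∑ v, (if G.Adj u v then J u v * spin (σ u) * spin (σ v) else 0)
        + ∑ u, h u * spin (σ u))
      / ∑ σ' : V → Bool,
        Real.exp (1 / 2 * ∑ u, ∑ v, (if G.Adj u v then J u v * spin (σ' u) * spin (σ' v) else 0)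
          + ∑ u, h u * spin (σ' u))

/-- Exterior vertex boundary of `A` in the graph `G`. -/
def graphBdry {V : Type*} [Fintype V] (G : SimpleGraph V) (A : Finset V) : Finset V :=
  Finset.univ.filter fun v => v ∉ A ∧ ∃ u ∈ A, G.Adj u v

/-- The event that all spins on `bd` take the value `b`. -/
def pinEventG {V : Type*} [Fintype V] (bd : Finset V) (b : Bool) : Finset (V → Bool) :=
  Finset.univ.filter fun σ => ∀ v ∈ bd, σ v = b

/-- Conditional marginal on `Δ`, given the event `E`. -/
def condMargG {V : Type*} [Fintype V] (p : (V → Bool) → ℝ) (E : Finset (V → Bool))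
    (Δ : Finset V) : (↥Δ → Bool) → ℝ :=
  fun τ => (∑ σ ∈ E, (if ∀ w : ↥Δ, σ w.1 = τ w then p σ else 0)) / ∑ σ ∈ E, p σ

/-- Conditional marginal of the single spin at `v`, given the event `E`. -/
def condMargAtG {V : Type*} [Fintype V] (p : (V → Bool) → ℝ) (E : Finset (V → Bool))
    (v : V) : Bool → ℝ :=
  fun b => (∑ σ ∈ E, (if σ v = b then p σ else 0)) / ∑ σ ∈ E, p σ


/-! ### Auxiliary development -/

section Aux

variable {d : ℕ}

lemma mem_ball_iff {c x : Site d} {r : ℕ} :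
    x ∈ ball c r ↔ ∀ i, c i - (r : ℤ) ≤ x i ∧ x i ≤ c i + (r : ℤ) := by
  simp [ball, Fintype.mem_piFinset, Finset.mem_Icc]

lemma mem_ball_add {c w x : Site d} {r : ℕ} :
    x ∈ ball (c + w) r ↔ x - w ∈ ball c r := by
  simp only [mem_ball_iff, Pi.add_apply, Pi.sub_apply]
  constructor <;> intro hx i <;> have := hx i <;> omega

lemma mem_image_add {A : Finset (Site d)} {z w : Site d} :
    z ∈ A.image (· + w) ↔ z - w ∈ A := by
  simp only [Finset.mem_image]
  constructor
  · rintro ⟨y, hy, rfl⟩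
    have : y + w - w = y := by ring
    rwa [this]
  · intro hz
    exact ⟨z - w, hz, by ring⟩

lemma ball_add (c w : Site d) (r : ℕ) : ball (c + w) r = (ball c r).image (· + w) := by
  ext x
  rw [mem_ball_add, mem_image_add]

lemma adj_add {x y : Site d} (w : Site d) : Adj (x + w) (y + w) ↔ Adj x y := by
  unfold Adj
  have : ∀ i, ((x + w) i - (y + w) i).natAbs = (x i - y i).natAbs := by
    intro i
    simp only [Pi.add_apply]
    congr 1
    ring
  rw [Finset.sum_congr rfl fun i _ => this i]

lemma bdry_image (A : Finset (Site d)) (w : Site d) :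
    bdry (A.image (· + w)) = (bdry A).image (· + w) := by
  ext z
  rw [mem_image_add]
  simp only [bdry, Finset.mem_filter, Finset.mem_biUnion, mem_image_add]
  constructor
  · rintro ⟨⟨u, hu, hz⟩, hnot, v, hv, hadj⟩
    refine ⟨⟨u - w, hu, ?_⟩, hnot, v - w, hv, ?_⟩
    · have : z ∈ ball ((u - w) + w) 1 := by
        have huw : (u - w) + w = u := by ring
        rwa [huw]
      rwa [mem_ball_add] at this
    · have hv' : (v - w) + w = v := by ring
      have hz' : (z - w) + w = z := by ring
      rw [← adj_add w, hv', hz']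
      exact hadj
  · rintro ⟨⟨u, hu, hz⟩, hnot, v, hv, hadj⟩
    refine ⟨⟨u + w, ?_, ?_⟩, hnot, v + w, ?_, ?_⟩
    · have : u + w - w = u := by ring
      rwa [this]
    · rwa [mem_ball_add]
    · have : v + w - w = v := by ring
      rwa [this]
    · have hz' : (z - w) + w = z := by ring
      have := (adj_add (x := v) (y := z - w) w).mpr hadj
      rwa [hz'] at this

lemma distInf_zero_sub (w z : Site d) : distInf (fun _ => 0) (z - w) = distInf w z := by
  unfold distInf
  apply Finset.sup_congr rfl
  intro i _
  congr 1
  simp only [Pi.sub_apply]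
  ring


def siteEquiv (w : Site d) (A : Finset (Site d)) : ↥A ≃ ↥(A.image (· + w)) where
  toFun u := ⟨u.1 + w, Finset.mem_image_of_mem _ u.2⟩
  invFun v := ⟨v.1 - w, mem_image_add.mp v.2⟩
  left_inv u := Subtype.ext (by show u.1 + w - w = u.1; ring)
  right_inv v := Subtype.ext (by show v.1 - w + w = v.1; ring)

def confEquiv (w : Site d) (A : Finset (Site d)) : Conf A ≃ Conf (A.image (· + w)) where
  toFun σ := fun v => σ ((siteEquiv w A).symm v)
  invFun σ' := fun u => σ' (siteEquiv w A u)
  left_inv σ := funext fun u => by simp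
  right_inv σ' := funext fun v => by simp

lemma confEquiv_apply (w : Site d) (A : Finset (Site d)) (σ : Conf A) (u : ↥A) :
    (confEquiv w A σ) (siteEquiv w A u) = σ u := by
  show σ ((siteEquiv w A).symm (siteEquiv w A u)) = σ u
  rw [Equiv.symm_apply_apply]

lemma energy_shift (β : ℝ) (η : Site d → ℝ) (A bd : Finset (Site d)) (τ : Site d → Bool)
    (w : Site d) (σ : Conf A) :
    energy β η (A.image (· + w)) (bd.image (· + w)) τ (confEquiv w A σ)
      = energy β (fun x => η (x + w)) A bd (fun x => τ (x + w)) σ := by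
  unfold energy
  have e := siteEquiv w A
  congr 1
  · congr 1
    · -- pair interaction term
      congr 1
      rw [← Equiv.sum_comp (siteEquiv w A)]
      refine Finset.sum_congr rfl fun u _ => ?_
      rw [← Equiv.sum_comp (siteEquiv w A)]
      refine Finset.sum_congr rfl fun v _ => ?_
      rw [confEquiv_apply, confEquiv_apply]
      have hAdj : Adj ((siteEquiv w A u).1 : Site d) ((siteEquiv w A v).1) ↔ Adj u.1 v.1 := by
        show Adj (u.1 + w) (v.1 + w) ↔ _
        exact adj_add w
      exact if_congr hAdj rfl rfl
    · -- boundary term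
      congr 1
      rw [← Equiv.sum_comp (siteEquiv w A)]
      refine Finset.sum_congr rfl fun u _ => ?_
      rw [Finset.sum_image (fun x _ y _ hxy => by
        have : x + w - w = y + w - w := by rw [hxy]
        simpa using this)]
      refine Finset.sum_congr rfl fun v hv => ?_
      rw [confEquiv_apply]
      have hAdj : Adj ((siteEquiv w A u).1 : Site d) (v + w) ↔ Adj u.1 v := by
        show Adj (u.1 + w) (v + w) ↔ _
        exact adj_add w
      exact if_congr hAdj rfl rfl
  · rw [← Equiv.sum_comp (siteEquiv w A)]
    refine Finset.sum_congr rfl fun u _ => ?_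
    rw [confEquiv_apply]
    rfl

lemma gibbs_shift (β : ℝ) (η : Site d → ℝ) (A bd : Finset (Site d)) (τ : Site d → Bool)
    (w : Site d) (σ : Conf A) :
    gibbs β η (A.image (· + w)) (bd.image (· + w)) τ (confEquiv w A σ)
      = gibbs β (fun x => η (x + w)) A bd (fun x => τ (x + w)) σ := by
  unfold gibbs
  rw [energy_shift]
  congr 1
  rw [← Equiv.sum_comp (confEquiv w A)]
  exact Finset.sum_congr rfl fun σ' _ => by rw [energy_shift]

lemma probPlusAt_shift (β : ℝ) (η : Site d → ℝ) (A bd : Finset (Site d)) (τ : Site d → Bool)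
    (w o : Site d) :
    probPlusAt (gibbs β η (A.image (· + w)) (bd.image (· + w)) τ) (o + w)
      = probPlusAt (gibbs β (fun x => η (x + w)) A bd (fun x => τ (x + w))) o := by
  unfold probPlusAt
  have hmem : o + w ∈ A.image (· + w) ↔ o ∈ A := by
    rw [mem_image_add]
    have : o + w - w = o := by ring
    rw [this]
  by_cases ho : o ∈ A
  · rw [dif_pos (hmem.mpr ho), dif_pos ho]
    rw [← Equiv.sum_comp (confEquiv w A)]
    refine Finset.sum_congr rfl fun σ _ => ?_
    have h1 : (confEquiv w A σ) ⟨o + w, hmem.mpr ho⟩ = σ ⟨o, ho⟩ := by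
      have : (⟨o + w, hmem.mpr ho⟩ : ↥(A.image (· + w))) = siteEquiv w A ⟨o, ho⟩ := rfl
      rw [this, confEquiv_apply]
    rw [h1, gibbs_shift]
  · rw [dif_neg (fun hm => ho (hmem.mp hm)), dif_neg ho]

lemma tvAt_shift (β : ℝ) (η : Site d → ℝ) (A bd : Finset (Site d)) (τ₁ τ₂ : Site d → Bool)
    (w o : Site d) :
    tvAt (gibbs β η (A.image (· + w)) (bd.image (· + w)) τ₁)
         (gibbs β η (A.image (· + w)) (bd.image (· + w)) τ₂) (o + w)
      = tvAt (gibbs β (fun x => η (x + w)) A bd (fun x => τ₁ (x + w)))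
             (gibbs β (fun x => η (x + w)) A bd (fun x => τ₂ (x + w))) o := by
  unfold tvAt
  rw [probPlusAt_shift, probPlusAt_shift]

lemma extendBC_shift (z : Site d) (ξ : Site d → Bool) (b : Bool) (w : Site d) :
    (fun x => extendBC z ξ b (x + w)) = extendBC (z - w) (fun y => ξ (y + w)) b := by
  funext x
  unfold extendBC
  by_cases hx : x + w = z
  · rw [if_pos hx, if_pos (by rw [← hx]; ring)]
  · rw [if_neg hx, if_neg (fun hc => hx (by rw [hc]; ring))]

/-- The key quantity: sup over boundary conditions of the influence of the spin at `z`. -/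
def fSup (β : ℝ) (η : Site d → ℝ) (c : Site d) (r : ℕ) (z o : Site d) : ℝ :=
  ⨆ ξ : Site d → Bool,
    tvAt (gibbs β η (ball c r) (bdry (ball c r)) (extendBC z ξ true))
         (gibbs β η (ball c r) (bdry (ball c r)) (extendBC z ξ false)) o

lemma fSup_shift (β : ℝ) (η : Site d → ℝ) (c : Site d) (r : ℕ) (z o w : Site d) :
    fSup β η (c + w) r z (o + w) = fSup β (fun x => η (x + w)) c r (z - w) o := by
  unfold fSup
  have hb : ball (c + w) r = (ball c r).image (· + w) := ball_add c w r
  have hbd : bdry (ball (c + w) r) = (bdry (ball c r)).image (· + w) := by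
    rw [hb, bdry_image]
  have key : ∀ ξ : Site d → Bool,
      tvAt (gibbs β η (ball (c + w) r) (bdry (ball (c + w) r)) (extendBC z ξ true))
           (gibbs β η (ball (c + w) r) (bdry (ball (c + w) r)) (extendBC z ξ false)) (o + w)
      = tvAt (gibbs β (fun x => η (x + w)) (ball c r) (bdry (ball c r))
               (extendBC (z - w) (fun y => ξ (y + w)) true))
             (gibbs β (fun x => η (x + w)) (ball c r) (bdry (ball c r))
               (extendBC (z - w) (fun y => ξ (y + w)) false)) o := by
    intro ξ
    rw [hbd, hb, tvAt_shift, extendBC_shift, extendBC_shift]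
  rw [iSup_congr key]
  have hsurj : Function.Surjective (fun (ξ : Site d → Bool) => (fun y => ξ (y + w))) := by
    intro ξ'
    refine ⟨fun x => ξ' (x - w), funext fun y => ?_⟩
    show ξ' (y + w - w) = ξ' y
    congr 1
    ring
  exact hsurj.iSup_comp (g := fun ξ' =>
    tvAt (gibbs β (fun x => η (x + w)) (ball c r) (bdry (ball c r)) (extendBC (z - w) ξ' true))
         (gibbs β (fun x => η (x + w)) (ball c r) (bdry (ball c r)) (extendBC (z - w) ξ' false)) o)


lemma energy_congr_field {β : ℝ} {η₁ η₂ : Site d → ℝ} {A bd : Finset (Site d)}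
    {τ : Site d → Bool} (hfield : ∀ x ∈ A, η₁ x = η₂ x) (σ : Conf A) :
    energy β η₁ A bd τ σ = energy β η₂ A bd τ σ := by
  unfold energy
  congr 1
  exact Finset.sum_congr rfl fun u _ => by rw [hfield u.1 u.2]

lemma gibbs_congr_field {β : ℝ} {η₁ η₂ : Site d → ℝ} {A bd : Finset (Site d)}
    {τ : Site d → Bool} (hfield : ∀ x ∈ A, η₁ x = η₂ x) :
    gibbs β η₁ A bd τ = gibbs β η₂ A bd τ := by
  funext σ
  unfold gibbs
  rw [energy_congr_field hfield]
  congr 1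
  exact Finset.sum_congr rfl fun σ' _ => by rw [energy_congr_field hfield]

lemma fSup_congr_field {β : ℝ} {η₁ η₂ : Site d → ℝ} {c : Site d} {r : ℕ} {z o : Site d}
    (hfield : ∀ x ∈ ball c r, η₁ x = η₂ x) :
    fSup β η₁ c r z o = fSup β η₂ c r z o := by
  unfold fSup
  exact iSup_congr fun ξ => by
    rw [gibbs_congr_field hfield, gibbs_congr_field hfield]

lemma energy_congr_bc {β : ℝ} {η : Site d → ℝ} {A bd : Finset (Site d)}
    {τ₁ τ₂ : Site d → Bool} (hbc : ∀ x ∈ bd, τ₁ x = τ₂ x) (σ : Conf A) :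
    energy β η A bd τ₁ σ = energy β η A bd τ₂ σ := by
  unfold energy
  have h2 : (∑ u : ↥A, ∑ v ∈ bd, (if Adj u.1 v then spin (σ u) * spin (τ₁ v) else 0))
      = ∑ u : ↥A, ∑ v ∈ bd, (if Adj u.1 v then spin (σ u) * spin (τ₂ v) else 0) :=
    Finset.sum_congr rfl fun u _ => Finset.sum_congr rfl fun v hv => by rw [hbc v hv]
  rw [h2]

lemma gibbs_congr_bc {β : ℝ} {η : Site d → ℝ} {A bd : Finset (Site d)}
    {τ₁ τ₂ : Site d → Bool} (hbc : ∀ x ∈ bd, τ₁ x = τ₂ x) :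
    gibbs β η A bd τ₁ = gibbs β η A bd τ₂ := by
  funext σ
  unfold gibbs
  rw [energy_congr_bc hbc]
  congr 1
  exact Finset.sum_congr rfl fun σ' _ => by rw [energy_congr_bc hbc]

/-- Extension of a boundary configuration to the whole lattice. -/
def liftB (bd : Finset (Site d)) (ζ : ↥bd → Bool) : Site d → Bool :=
  fun x => if hx : x ∈ bd then ζ ⟨x, hx⟩ else true

lemma fSup_eq_sup' (β : ℝ) (η : Site d → ℝ) (c : Site d) (r : ℕ) (z o : Site d) :
    fSup β η c r z o = Finset.univ.sup' Finset.univ_nonempty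
      (fun ζ : ↥(bdry (ball c r)) → Bool =>
        tvAt (gibbs β η (ball c r) (bdry (ball c r)) (extendBC z (liftB _ ζ) true))
             (gibbs β η (ball c r) (bdry (ball c r)) (extendBC z (liftB _ ζ) false)) o) := by
  set bd := bdry (ball c r) with hbd
  set F : (Site d → Bool) → ℝ := fun ξ =>
    tvAt (gibbs β η (ball c r) bd (extendBC z ξ true))
         (gibbs β η (ball c r) bd (extendBC z ξ false)) o with hF
  have hdep : ∀ ξ : Site d → Bool, F ξ = F (liftB bd (fun u => ξ u.1)) := by
    intro ξ
    have hagree : ∀ b : Bool, ∀ x ∈ bd, extendBC z ξ b x = extendBC z (liftB bd fun u => ξ u.1) b x := by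
      intro b x hx
      unfold extendBC liftB
      by_cases hxz : x = z
      · rw [if_pos hxz, if_pos hxz]
      · rw [if_neg hxz, if_neg hxz, dif_pos hx]
    simp only [hF]
    rw [gibbs_congr_bc (hagree true), gibbs_congr_bc (hagree false)]
  have hsurj : Function.Surjective (fun (ξ : Site d → Bool) (u : ↥bd) => ξ u.1) := by
    intro ζ
    refine ⟨liftB bd ζ, funext fun u => ?_⟩
    show liftB bd ζ u.1 = ζ u
    unfold liftB
    rw [dif_pos u.2]
  have h1 : fSup β η c r z o = ⨆ ξ : Site d → Bool, F (liftB bd (fun u => ξ u.1)) := by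
    unfold fSup
    exact iSup_congr hdep
  rw [h1, hsurj.iSup_comp (g := fun ζ => F (liftB bd ζ)), ← Finset.sup'_univ_eq_ciSup]

lemma expsum_pos (β : ℝ) (η : Site d → ℝ) (A bd : Finset (Site d)) (τ : Site d → Bool) :
    0 < ∑ σ' : Conf A, Real.exp (energy β η A bd τ σ') :=
  Finset.sum_pos (fun _ _ => Real.exp_pos _) Finset.univ_nonempty

lemma gibbs_nonneg (β : ℝ) (η : Site d → ℝ) (A bd : Finset (Site d)) (τ : Site d → Bool)
    (σ : Conf A) : 0 ≤ gibbs β η A bd τ σ :=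
  div_nonneg (Real.exp_pos _).le (expsum_pos β η A bd τ).le

lemma gibbs_sum_one (β : ℝ) (η : Site d → ℝ) (A bd : Finset (Site d)) (τ : Site d → Bool) :
    ∑ σ : Conf A, gibbs β η A bd τ σ = 1 := by
  unfold gibbs
  rw [← Finset.sum_div]
  exact div_self (expsum_pos β η A bd τ).ne'

lemma probPlusAt_gibbs_nonneg (β : ℝ) (η : Site d → ℝ) (A bd : Finset (Site d))
    (τ : Site d → Bool) (o : Site d) : 0 ≤ probPlusAt (gibbs β η A bd τ) o := by
  unfold probPlusAt
  by_cases ho : o ∈ A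
  · rw [dif_pos ho]
    refine Finset.sum_nonneg fun σ _ => ?_
    split
    · exact gibbs_nonneg β η A bd τ σ
    · exact le_rfl
  · rw [dif_neg ho]

lemma probPlusAt_gibbs_le_one (β : ℝ) (η : Site d → ℝ) (A bd : Finset (Site d))
    (τ : Site d → Bool) (o : Site d) : probPlusAt (gibbs β η A bd τ) o ≤ 1 := by
  unfold probPlusAt
  by_cases ho : o ∈ A
  · rw [dif_pos ho]
    calc (∑ σ : Conf A, if σ ⟨o, ho⟩ = true then gibbs β η A bd τ σ else 0)
        ≤ ∑ σ : Conf A, gibbs β η A bd τ σ := by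
          refine Finset.sum_le_sum fun σ _ => ?_
          split
          · exact le_rfl
          · exact gibbs_nonneg β η A bd τ σ
      _ = 1 := gibbs_sum_one β η A bd τ
  · rw [dif_neg ho]
    exact zero_le_one

lemma tvAt_gibbs_nonneg (β : ℝ) (η : Site d → ℝ) (A bd : Finset (Site d))
    (τ₁ τ₂ : Site d → Bool) (o : Site d) :
    0 ≤ tvAt (gibbs β η A bd τ₁) (gibbs β η A bd τ₂) o := abs_nonneg _

lemma tvAt_gibbs_le_one (β : ℝ) (η : Site d → ℝ) (A bd : Finset (Site d))
    (τ₁ τ₂ : Site d → Bool) (o : Site d) :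
    tvAt (gibbs β η A bd τ₁) (gibbs β η A bd τ₂) o ≤ 1 := by
  unfold tvAt
  rw [abs_le]
  constructor
  · have h1 := probPlusAt_gibbs_nonneg β η A bd τ₁ o
    have h2 := probPlusAt_gibbs_le_one β η A bd τ₂ o
    linarith
  · have h1 := probPlusAt_gibbs_le_one β η A bd τ₁ o
    have h2 := probPlusAt_gibbs_nonneg β η A bd τ₂ o
    linarith

lemma fSup_nonneg (β : ℝ) (η : Site d → ℝ) (c : Site d) (r : ℕ) (z o : Site d) :
    0 ≤ fSup β η c r z o := by
  rw [fSup_eq_sup']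
  have hne : (Finset.univ : Finset (↥(bdry (ball c r)) → Bool)).Nonempty := Finset.univ_nonempty
  obtain ⟨ζ, hζ⟩ := hne
  refine le_trans ?_ (Finset.le_sup' _ hζ)
  exact tvAt_gibbs_nonneg β η _ _ _ _ o

lemma fSup_le_one (β : ℝ) (η : Site d → ℝ) (c : Site d) (r : ℕ) (z o : Site d) :
    fSup β η c r z o ≤ 1 := by
  rw [fSup_eq_sup']
  exact Finset.sup'_le _ _ fun ζ _ => tvAt_gibbs_le_one β η _ _ _ _ o

lemma measurable_energy_field (β : ℝ) (A bd : Finset (Site d)) (τ : Site d → Bool)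
    (σ : Conf A) : Measurable (fun η : Site d → ℝ => energy β η A bd τ σ) := by
  unfold energy
  refine Measurable.add (Measurable.add measurable_const measurable_const) ?_
  refine Finset.measurable_sum _ fun u _ => ?_
  exact (measurable_pi_apply u.1).mul_const _

lemma measurable_gibbs_field (β : ℝ) (A bd : Finset (Site d)) (τ : Site d → Bool)
    (σ : Conf A) : Measurable (fun η : Site d → ℝ => gibbs β η A bd τ σ) := by
  unfold gibbs
  refine Measurable.div ?_ ?_
  · exact (measurable_energy_field β A bd τ σ).exp
  · exact Finset.measurable_sum _ fun σ' _ => (measurable_energy_field β A bd τ σ').exp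

lemma measurable_probPlusAt_field (β : ℝ) (A bd : Finset (Site d)) (τ : Site d → Bool)
    (o : Site d) : Measurable (fun η : Site d → ℝ => probPlusAt (gibbs β η A bd τ) o) := by
  unfold probPlusAt
  by_cases ho : o ∈ A
  · simp only [dif_pos ho]
    refine Finset.measurable_sum _ fun σ _ => ?_
    by_cases hσ : σ ⟨o, ho⟩ = true
    · simp only [if_pos hσ]
      exact measurable_gibbs_field β A bd τ σ
    · simp only [if_neg hσ]
      exact measurable_const
  · simp only [dif_neg ho]
    exact measurable_const

set_option maxHeartbeats 1000000 in
lemma measurable_fSup_field (β : ℝ) (c : Site d) (r : ℕ) (z o : Site d) :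
    Measurable (fun η : Site d → ℝ => fSup β η c r z o) := by
  set F : (↥(bdry (ball c r)) → Bool) → (Site d → ℝ) → ℝ := fun ζ η =>
    tvAt (gibbs β η (ball c r) (bdry (ball c r)) (extendBC z (liftB _ ζ) true))
         (gibbs β η (ball c r) (bdry (ball c r)) (extendBC z (liftB _ ζ) false)) o with hF
  have hm : ∀ ζ, Measurable (F ζ) := by
    intro ζ
    rw [hF]
    unfold tvAt
    exact ((measurable_probPlusAt_field β _ _ _ o).sub
      (measurable_probPlusAt_field β _ _ _ o)).abs
  have h1 : (fun η : Site d → ℝ => fSup β η c r z o)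
      = Finset.univ.sup' Finset.univ_nonempty F := by
    funext η
    rw [fSup_eq_sup']
    exact (Finset.sup'_apply Finset.univ_nonempty F η).symm
  rw [h1]
  exact Finset.measurable_sup' Finset.univ_nonempty fun ζ _ => hm ζ


lemma iIndepFun_reindex {Ω : Type} [MeasurableSpace Ω] {P : Measure Ω} {ι κ : Type*}
    {X : ι → Ω → ℝ} (hX : iIndepFun X P) (g : κ → ι)
    (hg : Function.Injective g) :
    iIndepFun (fun k => X (g k)) P := by
  rw [iIndepFun_iff_measure_inter_preimage_eq_mul] at hX ⊢
  intro S sets hsets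
  classical
  set sets' : ι → Set ℝ := fun i => ⋂ k ∈ S.filter (fun k' => g k' = i), sets k with hsets'
  have hkey : ∀ k ∈ S, sets' (g k) = sets k := by
    intro k hk
    have hfil : S.filter (fun k' => g k' = g k) = {k} := by
      ext k'
      simp only [Finset.mem_filter, Finset.mem_singleton]
      constructor
      · rintro ⟨_, h⟩
        exact hg h
      · rintro rfl
        exact ⟨hk, rfl⟩
    rw [hsets']
    simp only [hfil]
    simp
  have hmeas' : ∀ i ∈ S.image g, MeasurableSet (sets' i) := by
    intro i hi
    obtain ⟨k, hk, rfl⟩ := Finset.mem_image.mp hi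
    rw [hkey k hk]
    exact hsets k hk
  have h1 := hX (S.image g) hmeas'
  have h2 : (⋂ i ∈ S.image g, X i ⁻¹' sets' i) = ⋂ k ∈ S, X (g k) ⁻¹' sets k := by
    rw [Finset.set_biInter_finset_image]
    exact Set.iInter₂_congr fun k hk => by rw [hkey k hk]
  have h3 : (∏ i ∈ S.image g, P (X i ⁻¹' sets' i)) = ∏ k ∈ S, P (X (g k) ⁻¹' sets k) := by
    rw [Finset.prod_image (fun a _ b _ hab => hg hab)]
    exact Finset.prod_congr rfl fun k hk => by rw [hkey k hk]
  rw [← h2, ← h3]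
  exact h1

lemma map_joint_eq_pi {Ω : Type} [MeasurableSpace Ω] (P : Measure Ω) [IsProbabilityMeasure P]
    {ι : Type*} [Fintype ι] (X : ι → Ω → ℝ) (hm : ∀ i, Measurable (X i))
    (hX : iIndepFun X P) :
    Measure.map (fun ω i => X i ω) P = Measure.pi (fun i => Measure.map (X i) P) := by
  haveI : ∀ i, SigmaFinite (Measure.map (X i) P) := fun i => by
    haveI : IsProbabilityMeasure (Measure.map (X i) P) :=
      Measure.isProbabilityMeasure_map (hm i).aemeasurable
    infer_instance
  refine (Measure.pi_eq fun s hs => ?_).symm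
  rw [Measure.map_apply (measurable_pi_lambda _ hm) (MeasurableSet.univ_pi hs)]
  have hpre : (fun ω i => X i ω) ⁻¹' (Set.univ.pi s) = ⋂ i, X i ⁻¹' s i := by
    ext ω
    simp [Set.mem_pi]
  rw [hpre, hX.meas_iInter (fun i => ⟨s i, hs i, rfl⟩)]
  exact Finset.prod_congr rfl fun i _ => (Measure.map_apply (hm i) (hs i)).symm

lemma integral_joint_congr {Ω : Type} [MeasurableSpace Ω] (P : Measure Ω)
    [IsProbabilityMeasure P] {ι : Type*} [Fintype ι] (X Y : ι → Ω → ℝ)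
    (hmX : ∀ i, Measurable (X i)) (hmY : ∀ i, Measurable (Y i))
    (hX : iIndepFun X P)
    (hY : iIndepFun Y P)
    (hXY : ∀ i, Measure.map (X i) P = Measure.map (Y i) P)
    (G : (ι → ℝ) → ℝ) (hG : Measurable G) :
    ∫ ω, G (fun i => X i ω) ∂P = ∫ ω, G (fun i => Y i ω) ∂P := by
  have h1 : ∫ ω, G (fun i => X i ω) ∂P = ∫ c, G c ∂(Measure.map (fun ω i => X i ω) P) :=
    (integral_map (measurable_pi_lambda _ hmX).aemeasurable hG.aestronglyMeasurable).symm
  have h2 : ∫ ω, G (fun i => Y i ω) ∂P = ∫ c, G c ∂(Measure.map (fun ω i => Y i ω) P) :=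
    (integral_map (measurable_pi_lambda _ hmY).aemeasurable hG.aestronglyMeasurable).symm
  rw [h1, h2, map_joint_eq_pi P X hmX hX, map_joint_eq_pi P Y hmY hY]
  congr 1
  exact congrArg Measure.pi (funext fun i => hXY i)

lemma markov_bound {Ω : Type} [MeasurableSpace Ω] (P : Measure Ω) [IsProbabilityMeasure P]
    (f : Ω → ℝ) (hf : Measurable f) (h0 : ∀ ω, 0 ≤ f ω) (h1 : ∀ ω, f ω ≤ 1)
    {c ε : ℝ} (hε : 0 < ε) (hint : ∫ ω, f ω ∂P ≤ c) :
    P {ω | ε < f ω} ≤ ENNReal.ofReal (c / ε) := by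
  have hInt : Integrable f P := by
    refine (integrable_const (1 : ℝ)).mono' hf.aestronglyMeasurable ?_
    exact Filter.Eventually.of_forall fun ω => by
      rw [Real.norm_eq_abs, abs_of_nonneg (h0 ω)]
      exact h1 ω
  have hm := mul_meas_ge_le_integral_of_nonneg (Filter.Eventually.of_forall h0) hInt ε
  have hfin : P {ω | ε ≤ f ω} ≠ ⊤ := measure_ne_top _ _
  have htoReal : (P {ω | ε ≤ f ω}).toReal ≤ c / ε := by
    rw [le_div_iff₀ hε]
    calc (P {ω | ε ≤ f ω}).toReal * ε = ε * (P {ω | ε ≤ f ω}).toReal := mul_comm _ _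
      _ ≤ ∫ ω, f ω ∂P := hm
      _ ≤ c := hint
  calc P {ω | ε < f ω} ≤ P {ω | ε ≤ f ω} := measure_mono fun ω hω => le_of_lt (Set.mem_setOf_eq ▸ hω)
    _ = ENNReal.ofReal ((P {ω | ε ≤ f ω}).toReal) := (ENNReal.ofReal_toReal hfin).symm
    _ ≤ ENNReal.ofReal (c / ε) := ENNReal.ofReal_le_ofReal htoReal


lemma fSup_translate (β : ℝ) (η : Site d → ℝ) (w a z : Site d) (r : ℕ) :
    fSup β η (w + a) r (w + z) w = fSup β (fun x => η (x + w)) a r z (fun _ => 0) := by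
  have h := fSup_shift β η a r (w + z) (fun _ => 0) w
  rw [show a + w = w + a from add_comm a w,
      show ((fun _ => 0) : Site d) + w = w from by funext i; simp,
      show w + z - w = z from by ring] at h
  exact h

lemma integral_fSup_le {Ω : Type} [MeasurableSpace Ω] (P : Measure Ω) [IsProbabilityMeasure P]
    (h : Ω → Site d → ℝ) (hh : IIDField P h) (β C : ℝ) (hssm : SSM β P h C)
    (w a b : Site d) (r : ℕ) (hr : 1 ≤ r) (ha : ∀ i, a i ∈ Finset.Ioo (-(r : ℤ)) (r : ℤ))
    (hb : b ∈ bdry (ball a r)) :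
    ∫ ω, fSup β (h ω) (w + a) r (w + b) w ∂P
      ≤ C * Real.exp (-(distInf (fun _ => 0) b : ℝ) / C) := by
  obtain ⟨hmeas, hindep, hident⟩ := hh
  set A₀ := ball a r with hA₀
  set G : (↥A₀ → ℝ) → ℝ := fun cc =>
    fSup β (fun x => if hx : x ∈ A₀ then cc ⟨x, hx⟩ else 0) a r b (fun _ => 0) with hG
  have hGmeas : Measurable G := by
    rw [hG]
    have hext : Measurable (fun (cc : ↥A₀ → ℝ) => (fun x => if hx : x ∈ A₀ then cc ⟨x, hx⟩ else 0 : Site d → ℝ)) := by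
      refine measurable_pi_lambda _ fun x => ?_
      by_cases hx : x ∈ A₀
      · simp only [dif_pos hx]
        exact measurable_pi_apply _
      · simp only [dif_neg hx]
        exact measurable_const
    exact (measurable_fSup_field β a r b (fun _ => 0)).comp hext
  have hfact : ∀ η : Site d → ℝ, fSup β η a r b (fun _ => 0) = G (fun u => η u.1) := by
    intro η
    rw [hG]
    exact (fSup_congr_field (fun x hx => by rw [dif_pos hx])).symm
  have htrans : ∀ ω, fSup β (h ω) (w + a) r (w + b) w = G (fun u : ↥A₀ => h ω (u.1 + w)) := by
    intro ω
    rw [fSup_translate β (h ω) w a b r, hfact]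
  have hXm : ∀ u : ↥A₀, Measurable (fun ω => h ω (u.1 + w)) := fun u => hmeas _
  have hYm : ∀ u : ↥A₀, Measurable (fun ω => h ω u.1) := fun u => hmeas _
  have hXi : iIndepFun (fun (u : ↥A₀) (ω : Ω) => h ω (u.1 + w)) P :=
    iIndepFun_reindex hindep (fun u => u.1 + w) (fun u₁ u₂ h12 => Subtype.ext (by
      have h13 := congrArg (fun t : Site d => t - w) h12
      simpa using h13))
  have hYi : iIndepFun (fun (u : ↥A₀) (ω : Ω) => h ω u.1) P :=
    iIndepFun_reindex hindep (fun u => u.1) (fun u₁ u₂ h12 => Subtype.ext h12)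
  have hmapeq : ∀ u : ↥A₀,
      Measure.map (fun ω => h ω (u.1 + w)) P = Measure.map (fun ω => h ω u.1) P :=
    fun u => (hident (u.1 + w) u.1).map_eq
  have hint := integral_joint_congr P _ _ hXm hYm hXi hYi hmapeq G hGmeas
  calc ∫ ω, fSup β (h ω) (w + a) r (w + b) w ∂P
      = ∫ ω, G (fun u : ↥A₀ => h ω (u.1 + w)) ∂P := by
        rw [show (fun ω => fSup β (h ω) (w + a) r (w + b) w)
            = fun ω => G (fun u : ↥A₀ => h ω (u.1 + w)) from funext htrans]
    _ = ∫ ω, G (fun u : ↥A₀ => h ω u.1) ∂P := hint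
    _ = ∫ ω, fSup β (h ω) a r b (fun _ => 0) ∂P := by
        rw [show (fun ω => G (fun u : ↥A₀ => h ω u.1))
            = fun ω => fSup β (h ω) a r b (fun _ => 0) from funext fun ω => (hfact (h ω)).symm]
    _ ≤ C * Real.exp (-(distInf (fun _ => 0) b : ℝ) / C) := hssm r hr a ha b hb

lemma prob_tuple_bound {Ω : Type} [MeasurableSpace Ω] (P : Measure Ω) [IsProbabilityMeasure P]
    (h : Ω → Site d → ℝ) (hh : IIDField P h) (β C : ℝ) (hC : 0 < C) (hssm : SSM β P h C)
    (R ℓ r : ℕ) (w a b : Site d) (hr : 1 ≤ r) (ha : ∀ i, a i ∈ Finset.Ioo (-(r : ℤ)) (r : ℤ))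
    (hb : b ∈ bdry (ball a r)) (hℓ : distInf (fun _ => 0) b = ℓ)
    (hlog : Real.log R ^ 2 ≤ (ℓ : ℝ)) :
    P {ω | Real.exp (-(ℓ : ℝ) / (2 * C)) < fSup β (h ω) (w + a) r (w + b) w}
      ≤ ENNReal.ofReal (C * Real.exp (-(Real.log R) ^ 2 / (2 * C))) := by
  have hint : ∫ ω, fSup β (h ω) (w + a) r (w + b) w ∂P ≤ C * Real.exp (-(ℓ : ℝ) / C) := by
    have := integral_fSup_le P h hh β C hssm w a b r hr ha hb
    rwa [hℓ] at this
  have hmeasf : Measurable (fun ω => fSup β (h ω) (w + a) r (w + b) w) :=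
    (measurable_fSup_field β (w + a) r (w + b) w).comp
      (measurable_pi_lambda _ (fun x => hh.1 x))
  have hmark := markov_bound P _ hmeasf (fun ω => fSup_nonneg β (h ω) (w + a) r (w + b) w)
    (fun ω => fSup_le_one β (h ω) (w + a) r (w + b) w)
    (Real.exp_pos (-(ℓ : ℝ) / (2 * C))) hint
  refine le_trans hmark (ENNReal.ofReal_le_ofReal ?_)
  have hquot : C * Real.exp (-(ℓ : ℝ) / C) / Real.exp (-(ℓ : ℝ) / (2 * C))
      = C * Real.exp (-(ℓ : ℝ) / (2 * C)) := by
    rw [div_eq_mul_inv, ← Real.exp_neg, mul_assoc, ← Real.exp_add]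
    congr 2
    field_simp
    ring
  rw [hquot]
  refine mul_le_mul_of_nonneg_left (Real.exp_le_exp.mpr ?_) hC.le
  have h2C : (0 : ℝ) < 2 * C := by linarith
  exact (div_le_div_iff_of_pos_right h2C).mpr (neg_le_neg hlog)


lemma card_ball (c : Site d) (r : ℕ) : (ball c r).card = (2 * r + 1) ^ d := by
  unfold ball
  rw [Fintype.card_piFinset]
  have hIcc : ∀ i : Fin d, (Finset.Icc (c i - (r : ℤ)) (c i + (r : ℤ))).card = 2 * r + 1 := by
    intro i
    rw [Int.card_Icc]
    have : c i + (r : ℤ) + 1 - (c i - (r : ℤ)) = 2 * (r : ℤ) + 1 := by ring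
    rw [this]
    omega
  rw [Finset.prod_congr rfl fun i _ => hIcc i, Finset.prod_const, Finset.card_univ,
    Fintype.card_fin]

lemma bdry_ball_subset (c : Site d) (r : ℕ) : bdry (ball c r) ⊆ ball c (r + 1) := by
  intro z hz
  obtain ⟨hz1, _⟩ := Finset.mem_filter.mp hz
  obtain ⟨u, hu, hzu⟩ := Finset.mem_biUnion.mp hz1
  rw [mem_ball_iff] at hu hzu ⊢
  intro i
  have h1 := hu i
  have h2 := hzu i
  push_cast at h1 h2 ⊢
  omega

lemma exists_R0 (d : ℕ) (C : ℝ) (hC : 0 < C) :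
    ∃ R₀ : ℕ, 5 ≤ R₀ ∧ ∀ R : ℕ, R₀ ≤ R → 1 ≤ Real.log R ∧
      ((5 * R : ℝ)) ^ (3 * d + 2) * (C * Real.exp (-(Real.log R) ^ 2 / (2 * C)))
        ≤ 1 / (R : ℝ) ^ 5 := by
  set L : ℝ := Real.log ((5 : ℝ) ^ (3 * d + 7) * C) with hL
  set M : ℝ := max 0 L with hM
  set T : ℝ := max 1 (2 * C * ((3 * (d : ℝ) + 7) + M)) with hT
  refine ⟨max 5 (⌈Real.exp T⌉₊ + 1), le_max_left _ _, ?_⟩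
  intro R hR
  have hR5 : 5 ≤ R := le_trans (le_max_left _ _) hR
  have hRreal : Real.exp T ≤ (R : ℝ) := by
    have h1 : (⌈Real.exp T⌉₊ + 1 : ℕ) ≤ R := le_trans (le_max_right _ _) hR
    have h2 : Real.exp T ≤ (⌈Real.exp T⌉₊ : ℝ) := Nat.le_ceil _
    have h3 : ((⌈Real.exp T⌉₊ + 1 : ℕ) : ℝ) ≤ (R : ℝ) := Nat.cast_le.mpr h1
    push_cast at h3
    linarith
  have hRpos : (0 : ℝ) < R := lt_of_lt_of_le (Real.exp_pos T) hRreal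
  have hlogT : T ≤ Real.log R := by
    rw [← Real.log_exp T]
    exact Real.log_le_log (Real.exp_pos T) hRreal
  set t := Real.log R with ht
  have ht1 : (1 : ℝ) ≤ t := le_trans (le_max_left _ _) hlogT
  refine ⟨ht1, ?_⟩
  have h2C : (0 : ℝ) < 2 * C := by linarith
  have htT : 2 * C * ((3 * (d : ℝ) + 7) + M) ≤ t := le_trans (le_max_right _ _) hlogT
  have hM0 : (0 : ℝ) ≤ M := le_max_left _ _
  have hML : L ≤ M := le_max_right _ _
  -- key inequality
  have hkey : (5 * (R : ℝ)) ^ (3 * d + 2) * C * (R : ℝ) ^ 5 ≤ Real.exp (t ^ 2 / (2 * C)) := by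
    have hstep1 : (5 * (R : ℝ)) ^ (3 * d + 2) * C * (R : ℝ) ^ 5
        ≤ (5 : ℝ) ^ (3 * d + 7) * C * (R : ℝ) ^ (3 * d + 7) := by
      have e1 : (5 * (R : ℝ)) ^ (3 * d + 2) * C * (R : ℝ) ^ 5
          = (5 : ℝ) ^ (3 * d + 2) * C * (R : ℝ) ^ (3 * d + 7) := by
        rw [mul_pow]
        rw [show 3 * d + 7 = (3 * d + 2) + 5 from by omega, pow_add]
        ring
      rw [e1]
      have e2 : (5 : ℝ) ^ (3 * d + 2) ≤ (5 : ℝ) ^ (3 * d + 7) :=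
        pow_le_pow_right₀ (by norm_num) (by omega)
      have : (0 : ℝ) ≤ C * (R : ℝ) ^ (3 * d + 7) := by positivity
      nlinarith
    have hRexp : (R : ℝ) ^ (3 * d + 7) = Real.exp ((3 * (d : ℝ) + 7) * t) := by
      conv_lhs => rw [← Real.exp_log hRpos]
      rw [← Real.exp_nat_mul]
      congr 1
      push_cast
      ring
    have hCpow : (5 : ℝ) ^ (3 * d + 7) * C = Real.exp L := by
      rw [hL, Real.exp_log (by positivity)]
    calc (5 * (R : ℝ)) ^ (3 * d + 2) * C * (R : ℝ) ^ 5
        ≤ (5 : ℝ) ^ (3 * d + 7) * C * (R : ℝ) ^ (3 * d + 7) := hstep1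
      _ = Real.exp L * Real.exp ((3 * (d : ℝ) + 7) * t) := by rw [hRexp, hCpow]
      _ = Real.exp (L + (3 * (d : ℝ) + 7) * t) := by rw [Real.exp_add]
      _ ≤ Real.exp (t ^ 2 / (2 * C)) := by
          apply Real.exp_le_exp.mpr
          rw [le_div_iff₀ h2C]
          nlinarith [mul_le_mul_of_nonneg_left htT (by linarith : (0 : ℝ) ≤ t),
            mul_nonneg (mul_nonneg h2C.le hM0) (by linarith : (0 : ℝ) ≤ t - 1)]
    -- end hkey
  have hexp1 : Real.exp (-t ^ 2 / (2 * C)) * Real.exp (t ^ 2 / (2 * C)) = 1 := by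
    rw [← Real.exp_add, show -t ^ 2 / (2 * C) + t ^ 2 / (2 * C) = 0 from by ring,
      Real.exp_zero]
  have h5 : (0 : ℝ) < (R : ℝ) ^ 5 := by positivity
  rw [le_div_iff₀ h5]
  calc (5 * (R : ℝ)) ^ (3 * d + 2) * (C * Real.exp (-t ^ 2 / (2 * C))) * (R : ℝ) ^ 5
      = ((5 * (R : ℝ)) ^ (3 * d + 2) * C * (R : ℝ) ^ 5) * Real.exp (-t ^ 2 / (2 * C)) := by
        ring
    _ ≤ Real.exp (t ^ 2 / (2 * C)) * Real.exp (-t ^ 2 / (2 * C)) :=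
        mul_le_mul_of_nonneg_right hkey (Real.exp_pos _).le
    _ = 1 := by rw [mul_comm]; exact hexp1

end Aux

/-- under `SSM(C)` with i.i.d. fields, each coarse-graining vertex is `Bad`
(in the SSM sense, with constant `C_*(d,C)`) with probability at most `R^{-5}`, for all
`R ≥ R₀(d,C)`. -/
theorem prob_bad_block_ssm
    (d : ℕ) (hd : 2 ≤ d) (β : ℝ) (hβ : 0 < β) (C : ℝ) (hC : 0 < C) :
    ∃ Cstar : ℝ, 0 < Cstar ∧ ∃ R₀ : ℕ, ∀ R : ℕ, R₀ ≤ R → ∀ n : ℕ,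
      ∀ (Ω : Type) (_ : MeasurableSpace Ω) (P : Measure Ω) (_ : IsProbabilityMeasure P)
        (h : Ω → Site d → ℝ), IIDField P h → SSM β P h C →
      ∀ v ∈ coarse d n R,
        P {ω | ¬ GoodSSM n R Cstar β (h ω) v} ≤ ENNReal.ofReal (1 / (R : ℝ) ^ 5) := by
  obtain ⟨R₀, hR₀5, hR₀⟩ := exists_R0 d C hC
  refine ⟨2 * C, by linarith, R₀, ?_⟩
  intro R hRR n Ω mΩ P hPP h hIID hSSM v hv
  haveI := hPP
  obtain ⟨ht1, hineq⟩ := hR₀ R hRR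
  have hR5 : 5 ≤ R := le_trans hR₀5 hRR
  classical
  -- the finite set of tuples (w, ℓ, r, a, b); the boundary point is z = w + b
  set T : Finset (Site d × ℕ × ℕ × Site d × Site d) :=
    (ball v R) ×ˢ ((Finset.range (R + 1)) ×ˢ ((Finset.range (R + 1)) ×ˢ
      ((ball (fun _ => 0) R) ×ˢ (ball (fun _ => 0) (2 * R + 2))))) with hT
  set Cond : Site d × ℕ × ℕ × Site d × Site d → Prop := fun p =>
    1 ≤ p.2.2.1 ∧ (∀ i, p.2.2.2.1 i ∈ Finset.Ioo (-(p.2.2.1 : ℤ)) (p.2.2.1 : ℤ)) ∧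
      p.2.2.2.2 ∈ bdry (ball p.2.2.2.1 p.2.2.1) ∧
      distInf (fun _ => 0) p.2.2.2.2 = p.2.1 ∧ Real.log R ^ 2 ≤ (p.2.1 : ℝ) with hCond
  set E : Site d × ℕ × ℕ × Site d × Site d → Set Ω := fun p =>
    {ω | Cond p ∧ Real.exp (-(p.2.1 : ℝ) / (2 * C))
        < fSup β (h ω) (p.1 + p.2.2.2.1) p.2.2.1 (p.1 + p.2.2.2.2) p.1} with hE
  -- covering of the bad event
  have hcover : {ω | ¬ GoodSSM n R (2 * C) β (h ω) v} ⊆ ⋃ p ∈ T, E p := by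
    intro ω hω
    simp only [Set.mem_setOf_eq] at hω
    unfold GoodSSM at hω
    push_neg at hω
    obtain ⟨w, hw, ℓ, r, hlog, hl2r, h2rR, a, ha, z, hz, hdist, hgt⟩ := hω
    have h2rRnat : 2 * r ≤ R := by
      have hR4 : (2 * (r : ℝ)) ≤ (R : ℝ) := by
        have : (R : ℝ) / 4 ≤ (R : ℝ) := by
          have : (0 : ℝ) ≤ (R : ℝ) := Nat.cast_nonneg R
          linarith
        linarith
      exact_mod_cast hR4
    have hℓR : ℓ ≤ R := le_trans hl2r h2rRnat
    have hrR : r ≤ R := by omega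
    have hℓ1 : 1 ≤ ℓ := by
      have h1 : (1 : ℝ) ≤ Real.log R ^ 2 := by nlinarith
      have h2 : (1 : ℝ) ≤ (ℓ : ℝ) := le_trans h1 hlog
      exact_mod_cast h2
    have hr1 : 1 ≤ r := by omega
    have hb : z - w ∈ bdry (ball a r) := by
      rw [show w + a = a + w from add_comm w a, ball_add, bdry_image, mem_image_add] at hz
      exact hz
    have hzz : w + (z - w) = z := by ring
    have hmemT : (w, ℓ, r, a, z - w) ∈ T := by
      rw [hT]
      simp only [Finset.mem_product, Finset.mem_range]
      refine ⟨(Finset.mem_inter.mp hw).1, by omega, by omega, ?_, ?_⟩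
      · rw [mem_ball_iff]
        intro i
        have hai := ha i
        rw [Finset.mem_Ioo] at hai
        have hcast : (r : ℤ) ≤ (R : ℤ) := by exact_mod_cast hrR
        show (0 : ℤ) - ((R : ℕ) : ℤ) ≤ a i ∧ a i ≤ 0 + ((R : ℕ) : ℤ)
        omega
      · have hmem : z - w ∈ ball a (r + 1) := bdry_ball_subset a r hb
        rw [mem_ball_iff] at hmem ⊢
        intro i
        have h1 := hmem i
        have hai := ha i
        rw [Finset.mem_Ioo] at hai
        have hcast : (r : ℤ) ≤ (R : ℤ) := by exact_mod_cast hrR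
        show (0 : ℤ) - ((2 * R + 2 : ℕ) : ℤ) ≤ (z - w) i ∧ (z - w) i ≤ 0 + ((2 * R + 2 : ℕ) : ℤ)
        push_cast at h1 ⊢
        omega
    refine Set.mem_biUnion hmemT ?_
    rw [hE]
    refine ⟨⟨hr1, ha, hb, by rw [distInf_zero_sub]; exact hdist, hlog⟩, ?_⟩
    show Real.exp (-(ℓ : ℝ) / (2 * C)) < fSup β (h ω) (w + a) r (w + (z - w)) w
    rw [hzz]
    exact hgt
  -- uniform per-tuple bound
  set bnd : ENNReal := ENNReal.ofReal (C * Real.exp (-(Real.log R) ^ 2 / (2 * C))) with hbnd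
  have hbound : ∀ p ∈ T, P (E p) ≤ bnd := by
    rintro ⟨w, ℓ, r, a, b⟩ _
    by_cases hcond : Cond (w, ℓ, r, a, b)
    · have hEeq : E (w, ℓ, r, a, b)
          = {ω | Real.exp (-(ℓ : ℝ) / (2 * C)) < fSup β (h ω) (w + a) r (w + b) w} := by
        rw [hE]
        ext ω
        simp only [Set.mem_setOf_eq]
        exact and_iff_right hcond
      rw [hEeq, hbnd]
      obtain ⟨h1, h2, h3, h4, h5⟩ := hcond
      exact prob_tuple_bound P h hIID β C hC hSSM R ℓ r w a b h1 h2 h3 h4 h5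
    · have hEeq : E (w, ℓ, r, a, b) = ∅ := by
        rw [hE]
        ext ω
        simp only [Set.mem_setOf_eq, Set.mem_empty_iff_false, iff_false]
        exact fun hx => hcond hx.1
      rw [hEeq]
      simp
  -- union bound
  have hsum : P {ω | ¬ GoodSSM n R (2 * C) β (h ω) v} ≤ T.card • bnd :=
    le_trans (measure_mono hcover)
      (le_trans (measure_biUnion_finset_le T E) (Finset.sum_le_card_nsmul T _ _ hbound))
  -- cardinality bound
  have hcard : T.card ≤ (5 * R) ^ (3 * d + 2) := by
    have hTcard : T.card = (2 * R + 1) ^ d * ((R + 1) * ((R + 1) *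
        ((2 * R + 1) ^ d * (2 * (2 * R + 2) + 1) ^ d))) := by
      rw [hT]
      simp only [Finset.card_product, Finset.card_range, card_ball]
    rw [hTcard]
    have h1 : 2 * R + 1 ≤ 5 * R := by omega
    have h2 : R + 1 ≤ 5 * R := by omega
    have h3 : 2 * (2 * R + 2) + 1 ≤ 5 * R := by omega
    calc (2 * R + 1) ^ d * ((R + 1) * ((R + 1) * ((2 * R + 1) ^ d * (2 * (2 * R + 2) + 1) ^ d)))
        ≤ (5 * R) ^ d * ((5 * R) * ((5 * R) * ((5 * R) ^ d * (5 * R) ^ d))) := by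
          exact Nat.mul_le_mul (Nat.pow_le_pow_left h1 d) (Nat.mul_le_mul h2
            (Nat.mul_le_mul h2 (Nat.mul_le_mul (Nat.pow_le_pow_left h1 d)
              (Nat.pow_le_pow_left h3 d))))
      _ = (5 * R) ^ (3 * d + 2) := by ring
  -- conclusion
  have hfinal : (T.card : ENNReal) * bnd ≤ ENNReal.ofReal (1 / (R : ℝ) ^ 5) := by
    calc (T.card : ENNReal) * bnd ≤ (((5 * R) ^ (3 * d + 2) : ℕ) : ENNReal) * bnd := by
          exact mul_le_mul_left (Nat.cast_le.mpr hcard) bnd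
      _ = ENNReal.ofReal ((((5 * R) ^ (3 * d + 2) : ℕ) : ℝ)
            * (C * Real.exp (-(Real.log R) ^ 2 / (2 * C)))) := by
          rw [hbnd, ← ENNReal.ofReal_natCast ((5 * R) ^ (3 * d + 2)),
            ← ENNReal.ofReal_mul (Nat.cast_nonneg _)]
      _ ≤ ENNReal.ofReal (1 / (R : ℝ) ^ 5) := by
          apply ENNReal.ofReal_le_ofReal
          have hcast : (((5 * R) ^ (3 * d + 2) : ℕ) : ℝ) = (5 * (R : ℝ)) ^ (3 * d + 2) := by
            push_cast
            ring
          rw [hcast]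
          exact hineq
  calc P {ω | ¬ GoodSSM n R (2 * C) β (h ω) v} ≤ T.card • bnd := hsum
    _ = (T.card : ENNReal) * bnd := nsmul_eq_mul _ _
    _ ≤ ENNReal.ofReal (1 / (R : ℝ) ^ 5) := hfinal

end RFIM
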